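/- Let L : ℤ₊² → ℤᵈ be a link function with Δ_L < ∞, let ε₁, ..., ε_k ∈ {1, *} and let π be a partition of {1, ..., k} with |π| blocks. Define [π]_L to be the set of index vectors i = (i₁, ..., i_k) ∈ {1,...,n}^k such that L^{ε_u}(i_u, i_{u+1}) = L^{ε_v}(i_v, i_{v+1}) if and only if u and v lie in the same block of π (indices taken cyclically, i_{k+1} = i₁). Then #[π]_L ≤ Δ_L^{k - |π| - 1} · n^{|π| + 1}, so #[π]_L = O(n^{1+|π|}). -/

import Mathlib

/-- `π` is a partition of the finite set `S`: blocks are nonempty subsets of `S`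
and every element of `S` lies in exactly one block. -/
def IsPartitionOf (π : Finset (Finset ℕ)) (S : Finset ℕ) : Prop :=
  (∀ B ∈ π, B.Nonempty) ∧ (∀ B ∈ π, B ⊆ S) ∧ (∀ a ∈ S, ∃! B, B ∈ π ∧ a ∈ B)

/-- `π` is a pair-partition of `S`: a partition all of whose blocks have two elements. -/
def IsPairPartitionOf (π : Finset (Finset ℕ)) (S : Finset ℕ) : Prop :=
  IsPartitionOf π S ∧ ∀ B ∈ π, B.card = 2

/-- `π` is non-crossing: there are no `u₁ < u₂ < u₃ < u₄` with `u₁, u₃` in one block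
and `u₂, u₄` in a different block. -/
def IsNonCrossing (π : Finset (Finset ℕ)) : Prop :=
  ¬ ∃ u₁ u₂ u₃ u₄ : ℕ, u₁ < u₂ ∧ u₂ < u₃ ∧ u₃ < u₄ ∧
    ∃ B₁ ∈ π, ∃ B₂ ∈ π, B₁ ≠ B₂ ∧ u₁ ∈ B₁ ∧ u₃ ∈ B₁ ∧ u₂ ∈ B₂ ∧ u₄ ∈ B₂

/-- Cyclic successor on `{1, ..., m}`: `u + 1` except `m ↦ 1`. -/
def cyc (m u : ℕ) : ℕ := if u = m then 1 else u + 1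

/-- `u` and `v` lie in the same block of `π`. -/
def SameBlock (π : Finset (Finset ℕ)) (u v : ℕ) : Prop := ∃ B ∈ π, u ∈ B ∧ v ∈ B

/-- `L^ε(i,j)`: equal to `L(i,j)` when the symbol is `1` (here `true`) and to `L(j,i)`
when the symbol is `*` (here `false`), evaluated along the cyclic word. -/
def Leps {d : ℕ} (L : ℤ × ℤ → (Fin d → ℤ)) (m : ℕ) (ε : ℕ → Bool) (i : ℕ → ℤ)
    (u : ℕ) : Fin d → ℤ :=
  if ε u then L (i u, i (cyc m u)) else L (i (cyc m u), i u)

/-- The union of the blocks of `π` containing `w` (equals the unique block when `π`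
is a partition and `w` is in the ground set). -/
def blockU (π : Finset (Finset ℕ)) (w : ℕ) : Finset ℕ :=
  (π.filter (fun B => w ∈ B)).biUnion id

/-- The primary (smallest) element of the block containing `w`. -/
def primOf (π : Finset (Finset ℕ)) (w : ℕ) : ℕ :=
  if h : (blockU π w).Nonempty then (blockU π w).min' h else w

lemma blockU_eq {π : Finset (Finset ℕ)} {S : Finset ℕ} (hπ : IsPartitionOf π S)
    {w : ℕ} (hw : w ∈ S) {B : Finset ℕ} (hB : B ∈ π) (hwB : w ∈ B) :
    blockU π w = B := by
  obtain ⟨B', ⟨hB'π, hwB'⟩, huniq⟩ := hπ.2.2 w hw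
  have hBB' : B = B' := huniq B ⟨hB, hwB⟩
  subst hBB'
  have : π.filter (fun B' => w ∈ B') = {B} := by
    ext C
    simp only [Finset.mem_filter, Finset.mem_singleton]
    constructor
    · rintro ⟨h1, h2⟩; exact huniq C ⟨h1, h2⟩
    · rintro rfl; exact ⟨hB, hwB⟩
  rw [blockU, this, Finset.singleton_biUnion, id]

lemma primOf_eq_min' {π : Finset (Finset ℕ)} {S : Finset ℕ} (hπ : IsPartitionOf π S)
    {w : ℕ} (hw : w ∈ S) {B : Finset ℕ} (hB : B ∈ π) (hwB : w ∈ B) :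
    primOf π w = B.min' ⟨w, hwB⟩ := by
  have h := blockU_eq hπ hw hB hwB
  rw [primOf]
  rw [dif_pos (h ▸ ⟨w, hwB⟩)]
  simp_rw [h]

lemma primOf_spec {π : Finset (Finset ℕ)} {S : Finset ℕ} (hπ : IsPartitionOf π S)
    {w : ℕ} (hw : w ∈ S) :
    ∃ B ∈ π, w ∈ B ∧ primOf π w ∈ B ∧ primOf π w ≤ w := by
  obtain ⟨B, ⟨hBπ, hwB⟩, _⟩ := hπ.2.2 w hw
  refine ⟨B, hBπ, hwB, ?_, ?_⟩
  · rw [primOf_eq_min' hπ hw hBπ hwB]; exact B.min'_mem _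
  · rw [primOf_eq_min' hπ hw hBπ hwB]; exact B.min'_le _ hwB

lemma sameBlock_primOf {π : Finset (Finset ℕ)} {S : Finset ℕ} (hπ : IsPartitionOf π S)
    {w : ℕ} (hw : w ∈ S) : SameBlock π w (primOf π w) := by
  obtain ⟨B, h1, h2, h3, _⟩ := primOf_spec hπ hw
  exact ⟨B, h1, h2, h3⟩

/-- Candidate set for the value `i u`, given the earlier values. -/
noncomputable def cand {d : ℕ} (L : ℤ × ℤ → (Fin d → ℤ)) (k n : ℕ) (π : Finset (Finset ℕ))
    (ε : ℕ → Bool) (i : ℕ → ℤ) (u : ℕ) : Finset ℤ :=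
  if primOf π (u-1) = u - 1 then Finset.Icc (1:ℤ) (n:ℤ)
  else (Finset.Icc (1:ℤ) (n:ℤ)).filter (fun x =>
    (if ε (u-1) then L (i (u-1), x) else L (x, i (u-1))) = Leps L k ε i (primOf π (u-1)))

lemma primOf_zero {π : Finset (Finset ℕ)} {k : ℕ}
    (hπ : IsPartitionOf π (Finset.Icc 1 k)) : primOf π 0 = 0 := by
  have h : blockU π 0 = ∅ := by
    rw [Finset.eq_empty_iff_forall_notMem]
    intro x hx
    rw [blockU, Finset.mem_biUnion] at hx
    obtain ⟨B, hB, hxB⟩ := hx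
    rw [Finset.mem_filter] at hB
    have := hπ.2.1 B hB.1 hB.2
    simp [Finset.mem_Icc] at this
  rw [primOf, h]
  simp

/-- If the earlier values agree, candidate sets agree. -/
lemma cand_congr {d : ℕ} (L : ℤ × ℤ → (Fin d → ℤ)) {k : ℕ} (n : ℕ)
    {π : Finset (Finset ℕ)} (hπ : IsPartitionOf π (Finset.Icc 1 k))
    (ε : ℕ → Bool) {i j : ℕ → ℤ} {u : ℕ} (hu : u ∈ Finset.Icc 1 k)
    (hij : ∀ v < u, i v = j v) :
    cand L k n π ε i u = cand L k n π ε j u := by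
  rw [Finset.mem_Icc] at hu
  rw [cand, cand]
  by_cases hgen : primOf π (u-1) = u - 1
  · rw [if_pos hgen, if_pos hgen]
  · rw [if_neg hgen, if_neg hgen]
    have hu1 : 1 ≤ u - 1 := by
      rcases Nat.lt_or_ge u 2 with h | h
      · interval_cases u
        · omega
        · exact absurd (primOf_zero hπ) hgen
      · omega
    have humem : u - 1 ∈ Finset.Icc 1 k := by rw [Finset.mem_Icc]; omega
    set r := primOf π (u-1) with hr
    obtain ⟨B, hBπ, hwB, hrB, hrle⟩ := primOf_spec hπ humem
    have hrlt : r < u - 1 := lt_of_le_of_ne hrle hgen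
    have hrk : r ≠ k := by omega
    have h1 : i (u-1) = j (u-1) := hij _ (by omega)
    have h2 : i r = j r := hij _ (by omega)
    have h3 : i (cyc k r) = j (cyc k r) := by
      rw [cyc, if_neg hrk]; exact hij _ (by omega)
    congr 1
    funext x
    rw [h1, Leps, Leps, h2, h3]

lemma cand_mem {d : ℕ} {L : ℤ × ℤ → (Fin d → ℤ)} {k n : ℕ}
    {π : Finset (Finset ℕ)} (hπ : IsPartitionOf π (Finset.Icc 1 k))
    {ε : ℕ → Bool} {i : ℕ → ℤ} {u : ℕ} (hu : u ∈ Finset.Icc 1 k)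
    (hi : ∀ u ∈ Finset.Icc 1 k, i u ∈ Finset.Icc (1 : ℤ) (n:ℤ))
    (hpat : ∀ u ∈ Finset.Icc 1 k, ∀ v ∈ Finset.Icc 1 k,
          (Leps L k ε i u = Leps L k ε i v ↔ SameBlock π u v)) :
    i u ∈ cand L k n π ε i u := by
  have huIcc := hu
  rw [Finset.mem_Icc] at hu
  rw [cand]
  by_cases hgen : primOf π (u-1) = u - 1
  · rw [if_pos hgen]; exact hi u huIcc
  · rw [if_neg hgen]
    have hu1 : 1 ≤ u - 1 := by
      rcases Nat.lt_or_ge u 2 with h | h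
      · interval_cases u
        · omega
        · exact absurd (primOf_zero hπ) hgen
      · omega
    have humem : u - 1 ∈ Finset.Icc 1 k := by rw [Finset.mem_Icc]; omega
    set r := primOf π (u-1) with hr
    obtain ⟨B, hBπ, hwB, hrB, hrle⟩ := primOf_spec hπ humem
    have hrmem : r ∈ Finset.Icc 1 k := hπ.2.1 B hBπ hrB
    have hsame : SameBlock π (u-1) r := ⟨B, hBπ, hwB, hrB⟩
    have heq : Leps L k ε i (u-1) = Leps L k ε i r :=
      (hpat _ humem _ hrmem).mpr hsame
    rw [Finset.mem_filter]
    refine ⟨hi u huIcc, ?_⟩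
    rw [← heq, Leps]
    have hcyc : cyc k (u-1) = u := by rw [cyc, if_neg (by omega)]; omega
    rw [hcyc]

lemma cand_card {d : ℕ} {L : ℤ × ℤ → (Fin d → ℤ)} {k n Δ : ℕ}
    {π : Finset (Finset ℕ)}
    (hΔ : ∀ t : Fin d → ℤ,
      (∀ j : ℤ, ((Finset.Icc (1 : ℤ) n).filter (fun i => L (i, j) = t)).card ≤ Δ) ∧
      (∀ i : ℤ, ((Finset.Icc (1 : ℤ) n).filter (fun j => L (i, j) = t)).card ≤ Δ))
    (ε : ℕ → Bool) (i : ℕ → ℤ) (u : ℕ) :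
    (cand L k n π ε i u).card ≤ if primOf π (u-1) = u - 1 then n else min Δ n := by
  have hIcc : (Finset.Icc (1:ℤ) (n:ℤ)).card = n := by
    rw [Int.card_Icc]; simp
  rw [cand]
  by_cases hgen : primOf π (u-1) = u - 1
  · rw [if_pos hgen, if_pos hgen, hIcc]
  · rw [if_neg hgen, if_neg hgen]
    refine le_min ?_ ?_
    · by_cases hε : ε (u-1)
      · simp only [hε, if_true]
        exact (hΔ _).2 (i (u-1))
      · simp only [hε, if_false, Bool.false_eq_true]
        exact (hΔ _).1 (i (u-1))
    · calc _ ≤ (Finset.Icc (1:ℤ) (n:ℤ)).card := Finset.card_filter_le _ _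
        _ = n := hIcc

lemma prim_count {π : Finset (Finset ℕ)} {k : ℕ}
    (hπ : IsPartitionOf π (Finset.Icc 1 k)) :
    ((Finset.Icc 1 k).filter (fun w => primOf π w = w)).card ≤ π.card := by
  apply Finset.card_le_card_of_injOn (fun w => blockU π w)
  · intro w hw
    rw [Finset.mem_coe, Finset.mem_filter] at hw
    obtain ⟨B, hBπ, hwB, _, _⟩ := primOf_spec hπ hw.1
    rw [Finset.mem_coe]; beta_reduce; rw [blockU_eq hπ hw.1 hBπ hwB]
    exact hBπ
  · intro w hw w' hw' h
    simp only [Finset.coe_filter, Set.mem_setOf_eq] at hw hw'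
    simp only at h
    have hne : (blockU π w).Nonempty := by
      obtain ⟨B, hBπ, hwB, _⟩ := primOf_spec hπ hw.1
      rw [blockU_eq hπ hw.1 hBπ hwB]; exact ⟨w, hwB⟩
    have hne' : (blockU π w').Nonempty := by rw [← h]; exact hne
    have hmin : (blockU π w).min' hne = (blockU π w').min' hne' := by
      apply le_antisymm
      · exact Finset.min'_le _ _ (by rw [h]; exact (blockU π w').min'_mem hne')
      · exact Finset.min'_le _ _ (by rw [← h]; exact (blockU π w).min'_mem hne)
    have : primOf π w = primOf π w' := by
      rw [primOf, primOf, dif_pos hne, dif_pos hne']; exact hmin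
    rw [hw.2, hw'.2] at this
    exact this

lemma gen_count {π : Finset (Finset ℕ)} {k : ℕ} (hk : 0 < k)
    (hπ : IsPartitionOf π (Finset.Icc 1 k)) :
    ((Finset.univ : Finset (Fin k)).filter
      (fun u₀ : Fin k => primOf π (u₀ : ℕ) = (u₀ : ℕ))).card ≤ π.card + 1 := by
  have h1 : ((Finset.univ : Finset (Fin k)).filter
      (fun u₀ : Fin k => primOf π (u₀ : ℕ) = (u₀ : ℕ))).card ≤
      (insert 0 ((Finset.Icc 1 k).filter (fun w => primOf π w = w))).card := by
    refine Finset.card_le_card_of_injOn (fun u₀ : Fin k => (u₀ : ℕ)) ?_ ?_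
    · intro u₀ hu₀
      rw [Finset.mem_coe, Finset.mem_filter] at hu₀
      show (u₀ : ℕ) ∈ insert 0 ((Finset.Icc 1 k).filter (fun w => primOf π w = w))
      rw [Finset.mem_insert]
      by_cases h0 : (u₀ : ℕ) = 0
      · exact Or.inl h0
      · refine Or.inr ?_
        rw [Finset.mem_filter, Finset.mem_Icc]
        exact ⟨⟨by omega, le_of_lt u₀.2⟩, hu₀.2⟩
    · intro a _ b _ h
      exact Fin.ext h
  calc _ ≤ _ := h1
    _ ≤ ((Finset.Icc 1 k).filter (fun w => primOf π w = w)).card + 1 :=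
        Finset.card_insert_le _ _
    _ ≤ π.card + 1 := by have := prim_count hπ; omega

/-- `π` a partition of `{1,...,k}` with `|π|` blocks, `Δ_L ≤ Δ < ∞`: the number of
index vectors `i ∈ {1,...,n}^k` whose `L^ε`-coincidence pattern is exactly `π`
is at most `Δ^(k - |π| - 1) · n^(|π| + 1)`, i.e. `#[π]_L = O(n^{1+|π|})`. -/
theorem card_index_class_le {d : ℕ} (k n Δ : ℕ) (hk : 0 < k)
    (L : ℤ × ℤ → (Fin d → ℤ)) (ε : ℕ → Bool)
    (hΔ : ∀ t : Fin d → ℤ,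
      (∀ j : ℤ, ((Finset.Icc (1 : ℤ) n).filter (fun i => L (i, j) = t)).card ≤ Δ) ∧
      (∀ i : ℤ, ((Finset.Icc (1 : ℤ) n).filter (fun j => L (i, j) = t)).card ≤ Δ))
    (π : Finset (Finset ℕ)) (hπ : IsPartitionOf π (Finset.Icc 1 k)) :
    Set.ncard {i : ℕ → ℤ |
        (∀ u ∈ Finset.Icc 1 k, i u ∈ Finset.Icc (1 : ℤ) n) ∧
        (∀ u, u ∉ Finset.Icc 1 k → i u = 0) ∧
        (∀ u ∈ Finset.Icc 1 k, ∀ v ∈ Finset.Icc 1 k,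
          (Leps L k ε i u = Leps L k ε i v ↔ SameBlock π u v))} ≤
      Δ ^ (k - π.card - 1) * n ^ (π.card + 1) := by
  classical
  set S : Set (ℕ → ℤ) := {i : ℕ → ℤ |
        (∀ u ∈ Finset.Icc 1 k, i u ∈ Finset.Icc (1 : ℤ) n) ∧
        (∀ u, u ∉ Finset.Icc 1 k → i u = 0) ∧
        (∀ u ∈ Finset.Icc 1 k, ∀ v ∈ Finset.Icc 1 k,
          (Leps L k ε i u = Leps L k ε i v ↔ SameBlock π u v))} with hS
  by_cases hn : n = 0
  · have hempty : S = ∅ := by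
      rw [Set.eq_empty_iff_forall_notMem]
      intro i hi
      have h1 : (1 : ℕ) ∈ Finset.Icc 1 k := by rw [Finset.mem_Icc]; omega
      have := hi.1 1 h1
      rw [hn] at this
      simp at this
    rw [hempty, Set.ncard_empty]
    exact Nat.zero_le _
  have hn1 : 1 ≤ n := Nat.one_le_iff_ne_zero.mpr hn
  -- the injection into tuples of indices
  set Φ : (ℕ → ℤ) → (Fin k → ℕ) := fun i u₀ =>
    ((cand L k n π ε i ((u₀ : ℕ) + 1)).sort (· ≤ ·)).idxOf (i ((u₀ : ℕ) + 1)) with hΦ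
  set bnd : Fin k → ℕ := fun u₀ =>
    if primOf π ((u₀ : ℕ) + 1 - 1) = (u₀ : ℕ) + 1 - 1 then n else min Δ n with hbnd
  set T : Finset (Fin k → ℕ) := Fintype.piFinset fun u₀ => Finset.range (bnd u₀) with hT
  have hmemIcc : ∀ u₀ : Fin k, (u₀ : ℕ) + 1 ∈ Finset.Icc 1 k := by
    intro u₀; rw [Finset.mem_Icc]; have := u₀.2; omega
  have hmemcand : ∀ i ∈ S, ∀ u ∈ Finset.Icc 1 k, i u ∈ cand L k n π ε i u := by
    intro i hi u hu
    exact cand_mem hπ hu hi.1 hi.2.2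
  -- injectivity
  have hinj : Set.InjOn Φ S := by
    intro i hi j hj h
    have key : ∀ u : ℕ, i u = j u := by
      intro u
      induction u using Nat.strong_induction_on with
      | _ u IH =>
        by_cases hu : u ∈ Finset.Icc 1 k
        · have hcand : cand L k n π ε i u = cand L k n π ε j u :=
            cand_congr L n hπ ε hu (fun v hv => IH v hv)
          have hiu : i u ∈ cand L k n π ε i u := hmemcand i hi u hu
          have hju : j u ∈ cand L k n π ε i u := by
            rw [hcand]; exact hmemcand j hj u hu
          have hu' : u - 1 < k := by rw [Finset.mem_Icc] at hu; omega
          have hΦu := congrFun h ⟨u - 1, hu'⟩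
          have huu : ((⟨u - 1, hu'⟩ : Fin k) : ℕ) + 1 = u := by
            rw [Finset.mem_Icc] at hu; simp; omega
          rw [hΦ] at hΦu
          simp only [huu] at hΦu
          rw [← hcand] at hΦu
          exact (List.idxOf_inj
            ((Finset.mem_sort _).mpr hiu)).mp hΦu
        · rw [hi.2.1 u hu, hj.2.1 u hu]
    exact funext key
  -- image is contained in T
  have hsub : Φ '' S ⊆ ↑T := by
    rintro _ ⟨i, hi, rfl⟩
    rw [hT, Finset.mem_coe, Fintype.mem_piFinset]
    intro u₀
    rw [Finset.mem_range]
    have hlt : Φ i u₀ < (cand L k n π ε i ((u₀ : ℕ) + 1)).card := by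
      rw [hΦ]
      simp only
      rw [← Finset.length_sort (α := ℤ) (· ≤ ·)]
      exact List.idxOf_lt_length_iff.mpr
        ((Finset.mem_sort _).mpr (hmemcand i hi _ (hmemIcc u₀)))
    calc Φ i u₀ < _ := hlt
      _ ≤ bnd u₀ := cand_card hΔ ε i ((u₀ : ℕ) + 1)
  -- counting
  have hcount : S.ncard ≤ T.card := by
    calc S.ncard = (Φ '' S).ncard := (Set.ncard_image_of_injOn hinj).symm
      _ ≤ (↑T : Set (Fin k → ℕ)).ncard := Set.ncard_le_ncard hsub T.finite_toSet
      _ = T.card := Set.ncard_coe_finset T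
  -- compute the cardinality of T
  set g : ℕ := ((Finset.univ : Finset (Fin k)).filter
      (fun u₀ : Fin k => primOf π (u₀ : ℕ) = (u₀ : ℕ))).card with hg
  have hTcard : T.card = n ^ g * (min Δ n) ^ (k - g) := by
    rw [hT, Fintype.card_piFinset]
    simp only [Finset.card_range]
    rw [hbnd]
    simp only [Nat.add_sub_cancel]
    have hneg : ((Finset.univ : Finset (Fin k)).filter
        (fun u₀ : Fin k => ¬ primOf π (u₀ : ℕ) = (u₀ : ℕ))).card = k - g := by
      have := Finset.card_filter_add_card_filter_not (s := (Finset.univ : Finset (Fin k)))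
        (p := fun u₀ : Fin k => primOf π (u₀ : ℕ) = (u₀ : ℕ))
      simp only [Finset.card_univ, Fintype.card_fin] at this
      omega
    rw [Finset.prod_ite (fun _ => n) (fun _ => min Δ n), Finset.prod_const,
      Finset.prod_const, hneg, ← hg]
  have hgle : g ≤ π.card + 1 := gen_count hk hπ
  have hgk : g ≤ k := by
    calc g ≤ (Finset.univ : Finset (Fin k)).card := Finset.card_filter_le _ _
      _ = k := by simp
  -- final arithmetic
  have harith : n ^ g * (min Δ n) ^ (k - g) ≤ Δ ^ (k - π.card - 1) * n ^ (π.card + 1) := by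
    set c := π.card
    set a := k - c - 1 with ha
    have hak : a ≤ k - g := by omega
    have hsplit : k - g = a + (k - g - a) := by omega
    calc n ^ g * (min Δ n) ^ (k - g)
        = n ^ g * ((min Δ n) ^ a * (min Δ n) ^ (k - g - a)) := by
          conv_lhs => rw [hsplit, pow_add]
      _ ≤ n ^ g * (Δ ^ a * n ^ (k - g - a)) := by
          exact Nat.mul_le_mul_left _ (Nat.mul_le_mul
            (Nat.pow_le_pow_left (min_le_left _ _) _)
            (Nat.pow_le_pow_left (min_le_right _ _) _))
      _ = Δ ^ a * (n ^ g * n ^ (k - g - a)) := by ring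
      _ = Δ ^ a * n ^ (g + (k - g - a)) := by rw [pow_add]
      _ ≤ Δ ^ a * n ^ (c + 1) := by
          refine Nat.mul_le_mul_left _ (Nat.pow_le_pow_right hn1 ?_)
          omega
  calc S.ncard ≤ T.card := hcount
    _ = n ^ g * (min Δ n) ^ (k - g) := hTcard
    _ ≤ _ := harith
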